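/- The Lovász extension f⁻ of a submodular function f is convex on [0,1]^V. -/

import Mathlib

open MeasureTheory Finset

/-- A set function is submodular. -/
def Submodular {V : Type*} [DecidableEq V] (f : Finset V → ℝ) : Prop :=
  ∀ A B : Finset V, f (A ∪ B) + f (A ∩ B) ≤ f A + f B

/-- The Lovász extension: expectation over a uniform threshold θ ∈ (0,1). -/
noncomputable def lovasz {V : Type*} [Fintype V] [DecidableEq V]
    (f : Finset V → ℝ) (x : V → ℝ) : ℝ :=
  ∫ θ in Set.Ioo (0:ℝ) 1, f (Finset.univ.filter (fun i => θ ≤ x i))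

/-- Characteristic vector of a finite set. -/
def charVec {V : Type*} [DecidableEq V] (S : Finset V) : V → ℝ :=
  fun i => if i ∈ S then 1 else 0

section aux

variable {V : Type*} [DecidableEq V]

/-- Greedy sum along a list, starting from prefix set `P`. -/
noncomputable def gsum (f : Finset V → ℝ) (x : V → ℝ) : List V → Finset V → ℝ
  | [], _ => 0
  | i :: L, P => (f (insert i P) - f P) * x i + gsum f x L (insert i P)

lemma gsum_comb (f : Finset V → ℝ) (x y : V → ℝ) (a b : ℝ) :
    ∀ (L : List V) (P : Finset V),
      gsum f (a • x + b • y) L P = a * gsum f x L P + b * gsum f y L P := by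
  intro L
  induction L with
  | nil => intro P; simp [gsum]
  | cons i L ih =>
      intro P
      simp only [gsum, ih, Pi.add_apply, Pi.smul_apply, smul_eq_mul]
      ring

lemma gsum_zero (f : Finset V → ℝ) (x : V → ℝ) (θ : ℝ) :
    ∀ L : List V, (∀ i ∈ L, ¬ θ ≤ x i) →
      ∀ P : Finset V, gsum f (fun i => if θ ≤ x i then (1:ℝ) else 0) L P = 0 := by
  intro L
  induction L with
  | nil => intro _ P; simp [gsum]
  | cons i L ih =>
      intro h P
      have hi : ¬ θ ≤ x i := h i (by simp)
      simp only [gsum, if_neg hi, mul_zero, zero_add]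
      exact ih (fun j hj => h j (by simp [hj])) _

lemma gsum_sorted (f : Finset V → ℝ) (x : V → ℝ) (θ : ℝ) :
    ∀ L : List V, L.Pairwise (fun a b => x b ≤ x a) →
      ∀ P : Finset V,
        f P + gsum f (fun i => if θ ≤ x i then (1:ℝ) else 0) L P
          = f (P ∪ L.toFinset.filter (fun i => θ ≤ x i)) := by
  intro L
  induction L with
  | nil => intro _ P; simp [gsum]
  | cons i L ih =>
      intro hs P
      have hs' : L.Pairwise (fun a b => x b ≤ x a) := hs.tail
      by_cases hi : θ ≤ x i
      · have : f P + gsum f (fun i => if θ ≤ x i then (1:ℝ) else 0) (i :: L) P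
            = f (insert i P) + gsum f (fun i => if θ ≤ x i then (1:ℝ) else 0) L (insert i P) := by
          simp only [gsum, if_pos hi]; ring
        rw [this, ih hs' (insert i P)]
        congr 1
        rw [List.toFinset_cons, Finset.filter_insert, if_pos hi]
        ext j
        simp only [Finset.mem_union, Finset.mem_insert, Finset.mem_filter]
        tauto
      · have hall : ∀ j ∈ L, ¬ θ ≤ x j := by
          intro j hj hxj
          exact hi (le_trans hxj (List.rel_of_pairwise_cons hs hj))
        have hz := gsum_zero f x θ L hall (insert i P)
        have hfil : (i :: L).toFinset.filter (fun j => θ ≤ x j) = ∅ := by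
          rw [Finset.filter_eq_empty_iff]
          intro j hj
          rcases List.mem_toFinset.mp hj with hj
          rcases List.mem_cons.mp hj with rfl | hj
          · exact hi
          · exact hall j hj
        simp only [gsum, if_neg hi, mul_zero, zero_add, hz, add_zero, hfil,
          Finset.union_empty]

lemma gsum_le (f : Finset V → ℝ) (hf : Submodular f) (x : V → ℝ) (θ : ℝ) :
    ∀ L : List V, L.Nodup → ∀ P T : Finset V, T ⊆ P → (∀ i ∈ L, i ∉ P) →
      f T + gsum f (fun i => if θ ≤ x i then (1:ℝ) else 0) L P
        ≤ f (T ∪ L.toFinset.filter (fun i => θ ≤ x i)) := by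
  intro L
  induction L with
  | nil => intro _ P T _ _; simp [gsum]
  | cons i L ih =>
      intro hnd P T hTP hdis
      have hiP : i ∉ P := hdis i (by simp)
      have hdis' : ∀ j ∈ L, j ∉ insert i P := by
        intro j hj
        simp only [Finset.mem_insert, not_or]
        exact ⟨fun h => (List.nodup_cons.mp hnd).1 (h ▸ hj), hdis j (by simp [hj])⟩
      by_cases hi : θ ≤ x i
      · -- submodularity step
        have hsub : f (insert i P) + f T ≤ f P + f (insert i T) := by
          have h := hf P (insert i T)
          have h1 : P ∪ insert i T = insert i P := by
            rw [Finset.union_insert, Finset.union_eq_left.mpr hTP]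
          have h2 : P ∩ insert i T = T := by
            rw [Finset.inter_insert_of_notMem hiP, Finset.inter_eq_right.mpr hTP]
          rw [h1, h2] at h; linarith
        have hTi : insert i T ⊆ insert i P := Finset.insert_subset_insert i hTP
        have := ih (List.nodup_cons.mp hnd).2 (insert i P) (insert i T) hTi hdis'
        have hset : insert i T ∪ L.toFinset.filter (fun j => θ ≤ x j)
            = T ∪ (i :: L).toFinset.filter (fun j => θ ≤ x j) := by
          rw [List.toFinset_cons, Finset.filter_insert, if_pos hi]
          ext j
          simp only [Finset.mem_union, Finset.mem_insert, Finset.mem_filter]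
          tauto
        rw [hset] at this
        calc f T + gsum f (fun i => if θ ≤ x i then (1:ℝ) else 0) (i :: L) P
            = (f (insert i P) + f T - f P)
              + gsum f (fun i => if θ ≤ x i then (1:ℝ) else 0) L (insert i P) := by
              simp only [gsum, if_pos hi]; ring
          _ ≤ f (insert i T)
              + gsum f (fun i => if θ ≤ x i then (1:ℝ) else 0) L (insert i P) := by linarith
          _ ≤ _ := this
      · have hset : L.toFinset.filter (fun j => θ ≤ x j)
            = (i :: L).toFinset.filter (fun j => θ ≤ x j) := by
          rw [List.toFinset_cons, Finset.filter_insert, if_neg hi]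
        have := ih (List.nodup_cons.mp hnd).2 (insert i P) T
          (hTP.trans (Finset.subset_insert i P)) hdis'
        rw [hset] at this
        simpa only [gsum, if_neg hi, mul_zero, zero_add] using this

lemma indicator_integral (v : ℝ) (hv : v ∈ Set.Icc (0:ℝ) 1) :
    IntegrableOn (fun θ : ℝ => if θ ≤ v then (1:ℝ) else 0) (Set.Ioo 0 1) volume ∧
    ∫ θ in Set.Ioo (0:ℝ) 1, (if θ ≤ v then (1:ℝ) else 0) = v := by
  have hfun : (fun θ : ℝ => if θ ≤ v then (1:ℝ) else 0)
      = (Set.Iic v).indicator (fun _ => (1:ℝ)) := by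
    funext θ
    by_cases h : θ ≤ v
    · simp [Set.indicator_of_mem, h]
    · simp [Set.indicator_of_notMem, h]
  have hmeas : MeasurableSet (Set.Iic v) := measurableSet_Iic
  constructor
  · rw [hfun]
    exact (IntegrableOn.integrable (by
      rw [integrableOn_const_iff]
      right
      simp [Real.volume_Ioo]
      )).indicator hmeas
  · rw [hfun, MeasureTheory.setIntegral_indicator hmeas]
    rw [MeasureTheory.setIntegral_const]
    have hvol : volume (Set.Ioo (0:ℝ) 1 ∩ Set.Iic v) = ENNReal.ofReal v := by
      rcases lt_or_ge v 1 with h1 | h1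
      · have : Set.Ioo (0:ℝ) 1 ∩ Set.Iic v = Set.Ioc 0 v := by
          ext θ
          simp only [Set.mem_inter_iff, Set.mem_Ioo, Set.mem_Iic, Set.mem_Ioc]
          constructor
          · rintro ⟨⟨h0, _⟩, hv'⟩; exact ⟨h0, hv'⟩
          · rintro ⟨h0, hv'⟩; exact ⟨⟨h0, lt_of_le_of_lt hv' h1⟩, hv'⟩
        rw [this, Real.volume_Ioc, sub_zero]
      · have hv1 : v = 1 := le_antisymm hv.2 h1
        have : Set.Ioo (0:ℝ) 1 ∩ Set.Iic v = Set.Ioo 0 1 := by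
          apply Set.inter_eq_self_of_subset_left
          intro θ hθ; exact le_of_lt (lt_of_lt_of_le hθ.2 (by rw [hv1]))
        rw [this, Real.volume_Ioo, hv1]; norm_num
    rw [measureReal_def, hvol, ENNReal.toReal_ofReal hv.1, smul_eq_mul, mul_one]

lemma gsum_integral (f : Finset V → ℝ) (x : V → ℝ) :
    ∀ L : List V, (∀ i, x i ∈ Set.Icc (0:ℝ) 1) → ∀ P : Finset V,
      IntegrableOn (fun θ : ℝ => gsum f (fun i => if θ ≤ x i then (1:ℝ) else 0) L P)
        (Set.Ioo 0 1) volume ∧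
      ∫ θ in Set.Ioo (0:ℝ) 1, gsum f (fun i => if θ ≤ x i then (1:ℝ) else 0) L P
        = gsum f x L P := by
  intro L
  induction L with
  | nil => intro _ P; simp [gsum, integrableOn_const]
  | cons i L ih =>
      intro hx P
      obtain ⟨hint, hval⟩ := ih hx (insert i P)
      obtain ⟨hind, hindval⟩ := indicator_integral (x i) (hx i)
      have hint1 : IntegrableOn
          (fun θ : ℝ => (f (insert i P) - f P) * (if θ ≤ x i then (1:ℝ) else 0))
          (Set.Ioo 0 1) volume := hind.const_mul _
      constructor
      · exact hint1.add hint
      · have : ∫ θ in Set.Ioo (0:ℝ) 1,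
            gsum f (fun j => if θ ≤ x j then (1:ℝ) else 0) (i :: L) P
            = (∫ θ in Set.Ioo (0:ℝ) 1,
                (f (insert i P) - f P) * (if θ ≤ x i then (1:ℝ) else 0))
              + ∫ θ in Set.Ioo (0:ℝ) 1,
                gsum f (fun j => if θ ≤ x j then (1:ℝ) else 0) L (insert i P) := by
          simp only [gsum]
          exact integral_add hint1 hint
        rw [this, integral_const_mul, hindval, hval]
        simp [gsum]

variable [Fintype V]

lemma exists_sorted_list (z : V → ℝ) :
    ∃ L : List V, L.Nodup ∧ L.toFinset = Finset.univ ∧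
      L.Pairwise (fun a b => z b ≤ z a) := by
  classical
  have htot : IsTotal V (fun a b => z b ≤ z a) := ⟨fun a b => le_total (z b) (z a)⟩
  have htrans : IsTrans V (fun a b => z b ≤ z a) :=
    ⟨fun a b c hab hbc => le_trans hbc hab⟩
  let L := List.insertionSort (fun a b => z b ≤ z a) Finset.univ.toList
  have hperm : L.Perm Finset.univ.toList :=
    List.perm_insertionSort (fun a b => z b ≤ z a) Finset.univ.toList
  refine ⟨L, hperm.nodup_iff.mpr (Finset.nodup_toList _), ?_, ?_⟩
  · rw [List.toFinset_eq_of_perm _ _ hperm]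
    exact Finset.toList_toFinset _
  · haveI : Std.Total (fun a b : V => z b ≤ z a) := ⟨fun a b => le_total (z b) (z a)⟩
    exact List.pairwise_insertionSort (fun a b => z b ≤ z a) Finset.univ.toList

lemma lovasz_eq (f : Finset V → ℝ) (x : V → ℝ) (hx : ∀ i, x i ∈ Set.Icc (0:ℝ) 1)
    (L : List V) (hU : L.toFinset = Finset.univ)
    (hS : L.Pairwise (fun a b => x b ≤ x a)) :
    lovasz f x = f ∅ + gsum f x L ∅ := by
  have key : ∀ θ : ℝ, f (Finset.univ.filter (fun i => θ ≤ x i))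
      = f ∅ + gsum f (fun i => if θ ≤ x i then (1:ℝ) else 0) L ∅ := by
    intro θ
    rw [gsum_sorted f x θ L hS ∅, Finset.empty_union, hU]
  obtain ⟨hint, hval⟩ := gsum_integral f x L hx ∅
  have hconst : IntegrableOn (fun _ : ℝ => f ∅) (Set.Ioo (0:ℝ) 1) volume := by
    rw [integrableOn_const_iff]; right; simp [Real.volume_Ioo]
  calc lovasz f x
      = ∫ θ in Set.Ioo (0:ℝ) 1,
          (f ∅ + gsum f (fun i => if θ ≤ x i then (1:ℝ) else 0) L ∅) := by
        unfold lovasz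
        exact integral_congr_ae (Filter.Eventually.of_forall (fun θ => key θ))
    _ = (∫ _ in Set.Ioo (0:ℝ) 1, f ∅)
        + ∫ θ in Set.Ioo (0:ℝ) 1,
            gsum f (fun i => if θ ≤ x i then (1:ℝ) else 0) L ∅ :=
        integral_add hconst hint
    _ = f ∅ + gsum f x L ∅ := by
        rw [hval, MeasureTheory.setIntegral_const]
        simp [Real.volume_Ioo]

lemma le_lovasz (f : Finset V → ℝ) (hf : Submodular f) (x : V → ℝ)
    (hx : ∀ i, x i ∈ Set.Icc (0:ℝ) 1)
    (L : List V) (hN : L.Nodup) (hU : L.toFinset = Finset.univ) :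
    f ∅ + gsum f x L ∅ ≤ lovasz f x := by
  obtain ⟨L', hN', hU', hS'⟩ := exists_sorted_list x
  rw [lovasz_eq f x hx L' hU' hS']
  obtain ⟨hint, hval⟩ := gsum_integral f x L hx ∅
  obtain ⟨hint', hval'⟩ := gsum_integral f x L' hx ∅
  have hconst : IntegrableOn (fun _ : ℝ => f ∅) (Set.Ioo (0:ℝ) 1) volume := by
    rw [integrableOn_const_iff]; right; simp [Real.volume_Ioo]
  have hmono : ∫ θ in Set.Ioo (0:ℝ) 1,
      (f ∅ + gsum f (fun i => if θ ≤ x i then (1:ℝ) else 0) L ∅)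
      ≤ ∫ θ in Set.Ioo (0:ℝ) 1,
        (f ∅ + gsum f (fun i => if θ ≤ x i then (1:ℝ) else 0) L' ∅) := by
    have hi1 : IntegrableOn
        (fun θ : ℝ => f ∅ + gsum f (fun i => if θ ≤ x i then (1:ℝ) else 0) L ∅)
        (Set.Ioo 0 1) volume := hconst.add hint
    have hi2 : IntegrableOn
        (fun θ : ℝ => f ∅ + gsum f (fun i => if θ ≤ x i then (1:ℝ) else 0) L' ∅)
        (Set.Ioo 0 1) volume := hconst.add hint'
    apply MeasureTheory.setIntegral_mono_on hi1 hi2 measurableSet_Ioo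
    intro θ _
    have h1 : f ∅ + gsum f (fun i => if θ ≤ x i then (1:ℝ) else 0) L ∅
        ≤ f (∅ ∪ L.toFinset.filter (fun i => θ ≤ x i)) :=
      gsum_le f hf x θ L hN ∅ ∅ (subset_refl _) (by simp)
    have h2 : f ∅ + gsum f (fun i => if θ ≤ x i then (1:ℝ) else 0) L' ∅
        = f (∅ ∪ L'.toFinset.filter (fun i => θ ≤ x i)) :=
      gsum_sorted f x θ L' hS' ∅
    rw [hU] at h1
    rw [hU'] at h2
    rw [h2]
    exact h1
  have e1 : ∫ θ in Set.Ioo (0:ℝ) 1,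
      (f ∅ + gsum f (fun i => if θ ≤ x i then (1:ℝ) else 0) L ∅)
      = f ∅ + gsum f x L ∅ := by
    rw [integral_add hconst hint, hval, MeasureTheory.setIntegral_const]
    simp [Real.volume_Ioo]
  have e2 : ∫ θ in Set.Ioo (0:ℝ) 1,
      (f ∅ + gsum f (fun i => if θ ≤ x i then (1:ℝ) else 0) L' ∅)
      = f ∅ + gsum f x L' ∅ := by
    rw [integral_add hconst hint', hval', MeasureTheory.setIntegral_const]
    simp [Real.volume_Ioo]
  rw [e1, e2] at hmono
  exact hmono

end aux

/-- The Lovász extension of a submodular function is convex on `[0,1]^V`. -/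
theorem lovasz_convexOn {V : Type*} [Fintype V] [DecidableEq V]
    (f : Finset V → ℝ) (hf : Submodular f) (hnn : ∀ A : Finset V, 0 ≤ f A) :
    ConvexOn ℝ {x : V → ℝ | ∀ i, x i ∈ Set.Icc (0:ℝ) 1} (lovasz f) := by
  have hconv : Convex ℝ {x : V → ℝ | ∀ i, x i ∈ Set.Icc (0:ℝ) 1} := by
    intro x hx y hy a b ha hb hab i
    have := (convex_Icc (0:ℝ) 1) (hx i) (hy i) ha hb hab
    simpa using this
  refine ⟨hconv, ?_⟩
  intro x hx y hy a b ha hb hab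
  set z := a • x + b • y with hz
  have hzmem : ∀ i, z i ∈ Set.Icc (0:ℝ) 1 := hconv hx hy ha hb hab
  obtain ⟨L, hN, hU, hS⟩ := exists_sorted_list z
  have hxmem : ∀ i, x i ∈ Set.Icc (0:ℝ) 1 := hx
  have hymem : ∀ i, y i ∈ Set.Icc (0:ℝ) 1 := hy
  have hle_x : f ∅ + gsum f x L ∅ ≤ lovasz f x := le_lovasz f hf x hxmem L hN hU
  have hle_y : f ∅ + gsum f y L ∅ ≤ lovasz f y := le_lovasz f hf y hymem L hN hU
  have heq : lovasz f z = f ∅ + gsum f z L ∅ := lovasz_eq f z hzmem L hU hS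
  have hcomb : gsum f z L ∅ = a * gsum f x L ∅ + b * gsum f y L ∅ :=
    gsum_comb f x y a b L ∅
  calc lovasz f z = f ∅ + gsum f z L ∅ := heq
    _ = a * (f ∅ + gsum f x L ∅) + b * (f ∅ + gsum f y L ∅) := by
        rw [hcomb]; linear_combination (-(f ∅)) * hab
    _ ≤ a * lovasz f x + b * lovasz f y := by
        have h1 := mul_le_mul_of_nonneg_left hle_x ha
        have h2 := mul_le_mul_of_nonneg_left hle_y hb
        linarith
    _ = a • lovasz f x + b • lovasz f y := by simp [smul_eq_mul]
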